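/- The set of all order L-weakly compact operators from E to F is a closed vector subspace of the Banach space L(E, F) of bounded linear operators. -/

import Mathlib

open Filter Topology NormedSpace

open Filter Topology

section Defs

/-- A sequence in a lattice ordered group is pairwise disjoint. -/
def DisjSeq {G : Type*} [Lattice G] [AddCommGroup G] (y : ℕ → G) : Prop :=
  ∀ m n : ℕ, m ≠ n → |y m| ⊓ |y n| = 0

/-- The solid hull of a set. -/
def SolidHull {G : Type*} [Lattice G] [AddCommGroup G] (A : Set G) : Set G :=
  {z | ∃ a ∈ A, |z| ≤ |a|}

/-- A sequence is order bounded. -/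
def OrdBddSeq {G : Type*} [Preorder G] (y : ℕ → G) : Prop :=
  ∃ a b : G, ∀ n, a ≤ y n ∧ y n ≤ b

/-- A set is L-weakly compact: every disjoint sequence in its solid hull is norm null. -/
def LWCompactSet {G : Type*} [NormedAddCommGroup G] [Lattice G] (A : Set G) : Prop :=
  ∀ y : ℕ → G, (∀ n, y n ∈ SolidHull A) → DisjSeq y →
    Tendsto (fun n => ‖y n‖) atTop (𝓝 0)

/-- An operator is order L-weakly compact. -/
def OrderLWC {G H : Type*} [NormedAddCommGroup G] [Lattice G] [NormedSpace ℝ G]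
    [NormedAddCommGroup H] [Lattice H] [NormedSpace ℝ H] (T : G →L[ℝ] H) : Prop :=
  ∀ x : G, 0 ≤ x → LWCompactSet (T '' Set.Icc 0 x)

/-- An operator is L-weakly compact. -/
def LWC {X H : Type*} [NormedAddCommGroup X] [NormedSpace ℝ X]
    [NormedAddCommGroup H] [Lattice H] [NormedSpace ℝ H] (T : X →L[ℝ] H) : Prop :=
  LWCompactSet (T '' Metric.closedBall 0 1)

/-- An operator is M-weakly compact. -/
def MWC {G Y : Type*} [NormedAddCommGroup G] [Lattice G] [NormedSpace ℝ G]
    [NormedAddCommGroup Y] [NormedSpace ℝ Y] (T : G →L[ℝ] Y) : Prop :=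
  ∀ x : ℕ → G, (∃ C, ∀ n, ‖x n‖ ≤ C) → DisjSeq x →
    Tendsto (fun n => ‖T (x n)‖) atTop (𝓝 0)

/-- An operator is order M-weakly compact. -/
def OrderMWC {G H : Type*} [NormedAddCommGroup G] [Lattice G] [NormedSpace ℝ G]
    [NormedAddCommGroup H] [NormedSpace ℝ H] [Lattice (StrongDual ℝ H)]
    (T : G →L[ℝ] H) : Prop :=
  ∀ x : ℕ → G, (∀ n, ‖x n‖ ≤ 1) → DisjSeq x →
    ∀ f : ℕ → StrongDual ℝ H, OrdBddSeq f →
      Tendsto (fun n => f n (T (x n))) atTop (𝓝 0)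

/-- The norm is order continuous: every decreasing net with infimum `0` is norm null. -/
def OrderContinuousNorm (G : Type*) [NormedAddCommGroup G] [Lattice G] : Prop :=
  ∀ (ι : Type*) [Preorder ι] [Nonempty ι] [IsDirected ι (· ≤ ·)] (x : ι → G),
    Antitone x → IsGLB (Set.range x) 0 → Tendsto (fun i => ‖x i‖) atTop (𝓝 0)

/-- An operator between Banach lattices is order bounded. -/
def OrderBoundedOp {G H : Type*} [NormedAddCommGroup G] [Lattice G] [NormedSpace ℝ G]
    [NormedAddCommGroup H] [Lattice H] [NormedSpace ℝ H] (T : G →L[ℝ] H) : Prop :=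
  ∀ a b : G, ∃ c d : H, ∀ x : G, a ≤ x → x ≤ b → c ≤ T x ∧ T x ≤ d

/-- An operator into a Banach lattice is strong order bounded. -/
def StrongOrderBounded {X H : Type*} [NormedAddCommGroup X] [NormedSpace ℝ X]
    [NormedAddCommGroup H] [Lattice H] [NormedSpace ℝ H] (T : X →L[ℝ] H) : Prop :=
  ∃ a b : H, ∀ x : X, ‖x‖ ≤ 1 → a ≤ T x ∧ T x ≤ b

end Defs
section Aux

variable {G : Type*} [NormedAddCommGroup G] [Lattice G] [IsOrderedAddMonoid G] [HasSolidNorm G] [NormedSpace ℝ G]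

private lemma pow2_cancel : ∀ (k : ℕ) (b : G), 0 ≤ 2 ^ k • b → 0 ≤ b := by
  intro k
  induction k with
  | zero => intro b h; simpa using h
  | succ k ih =>
    intro b h
    apply nsmul_two_semiclosed
    apply ih
    rw [pow_succ', mul_nsmul] at h
    exact h

private lemma smul_nonneg_real {c : ℝ} (hc : 0 ≤ c) {a : G} (ha : 0 ≤ a) : 0 ≤ c • a := by
  set s : ℕ → ℝ := fun k => (⌊2 ^ k * c⌋₊ : ℝ) / 2 ^ k with hs_def
  have h2k : ∀ k : ℕ, (0:ℝ) < 2 ^ k := fun k => by positivity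
  have hsa : ∀ k, 0 ≤ s k • a := by
    intro k
    apply pow2_cancel k
    have key : (2 ^ k) • (s k • a) = (⌊2 ^ k * c⌋₊) • a := by
      rw [← Nat.cast_smul_eq_nsmul ℝ, ← Nat.cast_smul_eq_nsmul ℝ, smul_smul]
      congr 1
      push_cast
      simp only [hs_def]
      field_simp
    rw [key]
    exact nsmul_nonneg ha _
  have hs : Filter.Tendsto s Filter.atTop (nhds c) := by
    have hupper : ∀ k, s k ≤ c := by
      intro k
      rw [hs_def]
      rw [div_le_iff₀ (h2k k), mul_comm]
      exact Nat.floor_le (by positivity)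
    have hlower : ∀ k, c - (2⁻¹ : ℝ) ^ k ≤ s k := by
      intro k
      have := Nat.sub_one_lt_floor (2 ^ k * c)
      rw [hs_def]
      rw [le_div_iff₀ (h2k k)]
      have h2 : (2⁻¹:ℝ)^k = (2^k)⁻¹ := by rw [inv_pow]
      rw [h2]
      have := le_of_lt this
      nlinarith [h2k k, mul_pos (h2k k) (inv_pos.2 (h2k k)), mul_inv_cancel₀ (ne_of_gt (h2k k))]
    have hg : Filter.Tendsto (fun k : ℕ => c - (2⁻¹ : ℝ) ^ k) Filter.atTop (nhds c) := by
      have := Filter.Tendsto.sub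
        (tendsto_const_nhds : Filter.Tendsto (fun _ : ℕ => c) Filter.atTop (nhds c))
        (tendsto_pow_atTop_nhds_zero_of_lt_one (by norm_num) (by norm_num : (2⁻¹:ℝ) < 1))
      simpa using this
    exact tendsto_of_tendsto_of_tendsto_of_le_of_le hg tendsto_const_nhds hlower hupper
  exact (isClosed_le continuous_const continuous_id).mem_of_tendsto (hs.smul_const a)
    (Filter.Eventually.of_forall hsa)

private lemma smul_mono_real {c : ℝ} (hc : 0 ≤ c) {a b : G} (hab : a ≤ b) : c • a ≤ c • b := by
  have := smul_nonneg_real hc (sub_nonneg.2 hab)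
  rw [smul_sub] at this
  exact sub_nonneg.1 this

private lemma smul_sup_real {c : ℝ} (hc : 0 < c) (a b : G) : c • (a ⊔ b) = c • a ⊔ c • b := by
  refine le_antisymm ?_ (sup_le (smul_mono_real hc.le le_sup_left) (smul_mono_real hc.le le_sup_right))
  have h1 : a ⊔ b ≤ c⁻¹ • (c • a ⊔ c • b) := by
    refine sup_le ?_ ?_
    · have := smul_mono_real (inv_nonneg.2 hc.le) (le_sup_left : c • a ≤ c • a ⊔ c • b)
      rwa [inv_smul_smul₀ hc.ne'] at this
    · have := smul_mono_real (inv_nonneg.2 hc.le) (le_sup_right : c • b ≤ c • a ⊔ c • b)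
      rwa [inv_smul_smul₀ hc.ne'] at this
  have := smul_mono_real hc.le h1
  rwa [smul_inv_smul₀ hc.ne'] at this

private lemma smul_inf_real {c : ℝ} (hc : 0 < c) (a b : G) : c • (a ⊓ b) = c • a ⊓ c • b := by
  refine le_antisymm (le_inf (smul_mono_real hc.le inf_le_left) (smul_mono_real hc.le inf_le_right)) ?_
  have h1 : c⁻¹ • (c • a ⊓ c • b) ≤ a ⊓ b := by
    refine le_inf ?_ ?_
    · have := smul_mono_real (inv_nonneg.2 hc.le) (inf_le_left : c • a ⊓ c • b ≤ c • a)
      rwa [inv_smul_smul₀ hc.ne'] at this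
    · have := smul_mono_real (inv_nonneg.2 hc.le) (inf_le_right : c • a ⊓ c • b ≤ c • b)
      rwa [inv_smul_smul₀ hc.ne'] at this
  have := smul_mono_real hc.le h1
  rwa [smul_inv_smul₀ hc.ne'] at this

private lemma abs_eq_sup_neg' (g : G) : |g| = g ⊔ -g := rfl

private lemma abs_smul_real (c : ℝ) (a : G) : |c • a| = |c| • |a| := by
  rcases lt_trichotomy c 0 with hc | hc | hc
  · have h1 : c • a = (-c) • (-a) := by rw [neg_smul, smul_neg, neg_neg]
    rw [h1, abs_of_neg hc]
    rw [abs_eq_sup_neg', abs_eq_sup_neg', smul_sup_real (by linarith), smul_neg, neg_neg, sup_comm]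
  · simp [hc]
  · rw [abs_of_pos hc, abs_eq_sup_neg', abs_eq_sup_neg', smul_sup_real hc, smul_neg]

private lemma riesz_decomp {z p q : G} (hz : 0 ≤ z) (hp : 0 ≤ p) (hq : 0 ≤ q) (h : z ≤ p + q) :
    ∃ u v : G, z = u + v ∧ 0 ≤ u ∧ u ≤ p ∧ 0 ≤ v ∧ v ≤ q := by
  refine ⟨z ⊓ p, z - z ⊓ p, by abel, le_inf hz hp, inf_le_right, sub_nonneg.2 inf_le_left, ?_⟩
  rw [sub_inf, sub_self]
  exact sup_le hq (by rwa [sub_le_iff_le_add'])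

private lemma disj_dominated {y w : ℕ → G} (hd : DisjSeq y) (h0 : ∀ n, 0 ≤ w n)
    (hle : ∀ n, w n ≤ |y n|) : DisjSeq w := by
  intro m n hmn
  refine le_antisymm ?_ (le_inf (abs_nonneg _) (abs_nonneg _))
  rw [abs_of_nonneg (h0 m), abs_of_nonneg (h0 n)]
  calc w m ⊓ w n ≤ |y m| ⊓ |y n| := inf_le_inf (hle m) (hle n)
    _ = 0 := hd m n hmn

end Aux
theorem stmt8 {E F : Type*} [NormedAddCommGroup E] [Lattice E] [IsOrderedAddMonoid E] [HasSolidNorm E] [NormedSpace ℝ E] [CompleteSpace E]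
    [NormedAddCommGroup F] [Lattice F] [IsOrderedAddMonoid F] [HasSolidNorm F] [NormedSpace ℝ F] [CompleteSpace F] :
    IsClosed {T : E →L[ℝ] F | OrderLWC T} ∧
    OrderLWC (0 : E →L[ℝ] F) ∧
    (∀ S T : E →L[ℝ] F, OrderLWC S → OrderLWC T → OrderLWC (S + T)) ∧
    (∀ (c : ℝ) (T : E →L[ℝ] F), OrderLWC T → OrderLWC (c • T)) := by
  have hzero : OrderLWC (0 : E →L[ℝ] F) := by
    intro x hx y hy hd
    have hy0 : ∀ n, ‖y n‖ = 0 := by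
      intro n
      obtain ⟨z, hz, hyz⟩ := hy n
      obtain ⟨a, _, rfl⟩ := hz
      have : |y n| ≤ |(0 : F)| := by simpa using hyz
      have := HasSolidNorm.solid this
      simp only [norm_zero] at this
      exact le_antisymm this (norm_nonneg _)
    simp [funext hy0]
  refine ⟨?_, hzero, ?_, ?_⟩
  · -- closedness
    apply isClosed_of_closure_subset
    intro T hT x hx y hy hd
    choose z hz hyz using hy
    choose a ha haz using hz
    have hax : ∀ n, ‖a n‖ ≤ ‖x‖ := by
      intro n
      apply HasSolidNorm.solid
      rw [abs_of_nonneg (ha n).1, abs_of_nonneg (le_trans (ha n).1 (ha n).2)]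
      exact (ha n).2
    rw [Metric.tendsto_atTop]
    intro ε hε
    have hδ : 0 < ε / (2 * (‖x‖ + 1)) := by positivity
    obtain ⟨S, hSmem, hTS⟩ := Metric.mem_closure_iff.1 hT _ hδ
    -- decompose |y n| ≤ |S (a n)| + |(T - S) (a n)|
    have hyb : ∀ n, |y n| ≤ |S (a n)| + |(T - S) (a n)| := by
      intro n
      refine le_trans (hyz n) ?_
      have : z n = S (a n) + (T - S) (a n) := by
        rw [← haz n]; simp
      rw [this]
      exact abs_add_le _ _
    have hdec := fun n => riesz_decomp (abs_nonneg (y n)) (abs_nonneg (S (a n)))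
      (abs_nonneg ((T - S) (a n))) (hyb n)
    choose u v huv hu0 hup hv0 hvq using hdec
    -- u tends to 0
    have hu_solid : ∀ n, u n ∈ SolidHull (S '' Set.Icc 0 x) := by
      intro n
      exact ⟨S (a n), ⟨a n, Set.mem_Icc.2 (ha n), rfl⟩, by
        rw [abs_of_nonneg (hu0 n)]; exact hup n⟩
    have hu_disj : DisjSeq u := disj_dominated hd hu0
      (fun n => by rw [huv n]; exact le_add_of_nonneg_right (hv0 n))
    have hu_tend := hSmem x hx u hu_solid hu_disj
    rw [Metric.tendsto_atTop] at hu_tend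
    obtain ⟨N, hN⟩ := hu_tend (ε / 2) (by positivity)
    refine ⟨N, fun n hn => ?_⟩
    have hvn : ‖v n‖ ≤ ε / 2 := by
      have h1 : ‖v n‖ ≤ ‖(T - S) (a n)‖ := by
        apply HasSolidNorm.solid
        rw [abs_of_nonneg (hv0 n)]
        simpa using hvq n
      have h2 : ‖(T - S) (a n)‖ ≤ ‖T - S‖ * ‖a n‖ := (T - S).le_opNorm _
      have h3 : ‖T - S‖ < ε / (2 * (‖x‖ + 1)) := by rwa [← dist_eq_norm]
      have h4 : ‖T - S‖ * ‖a n‖ ≤ (ε / (2 * (‖x‖ + 1))) * (‖x‖ + 1) := by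
        apply mul_le_mul h3.le (le_trans (hax n) (by linarith)) (norm_nonneg _) hδ.le
      have h5 : (ε / (2 * (‖x‖ + 1))) * (‖x‖ + 1) = ε / 2 := by
        field_simp
      linarith
    have hun : ‖u n‖ < ε / 2 := by
      have := hN n hn
      rwa [Real.dist_eq, sub_zero, abs_of_nonneg (norm_nonneg _)] at this
    have hyn : ‖y n‖ ≤ ‖u n‖ + ‖v n‖ := by
      rw [← norm_abs_eq_norm (y n), huv n]
      exact norm_add_le _ _
    rw [Real.dist_eq, sub_zero, abs_of_nonneg (norm_nonneg _)]
    linarith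
  · -- addition
    intro S T hS hT x hx y hy hd
    choose z hz hyz using hy
    choose a ha haz using hz
    have hyb : ∀ n, |y n| ≤ |S (a n)| + |T (a n)| := by
      intro n
      refine le_trans (hyz n) ?_
      have : z n = S (a n) + T (a n) := by rw [← haz n]; simp
      rw [this]
      exact abs_add_le _ _
    have hdec := fun n => riesz_decomp (abs_nonneg (y n)) (abs_nonneg (S (a n)))
      (abs_nonneg (T (a n))) (hyb n)
    choose u v huv hu0 hup hv0 hvq using hdec
    have hu_tend := hS x hx u (fun n =>
        ⟨S (a n), ⟨a n, Set.mem_Icc.2 (ha n), rfl⟩, by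
          rw [abs_of_nonneg (hu0 n)]; exact hup n⟩)
      (disj_dominated hd hu0 (fun n => by rw [huv n]; exact le_add_of_nonneg_right (hv0 n)))
    have hv_tend := hT x hx v (fun n =>
        ⟨T (a n), ⟨a n, Set.mem_Icc.2 (ha n), rfl⟩, by
          rw [abs_of_nonneg (hv0 n)]; exact hvq n⟩)
      (disj_dominated hd hv0 (fun n => by rw [huv n]; exact le_add_of_nonneg_left (hu0 n)))
    have hyn : ∀ n, ‖y n‖ ≤ ‖u n‖ + ‖v n‖ := by
      intro n
      rw [← norm_abs_eq_norm (y n), huv n]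
      exact norm_add_le _ _
    have := squeeze_zero (fun n => norm_nonneg (y n)) hyn (by simpa using hu_tend.add hv_tend)
    exact this
  · -- scalar multiplication
    intro c T hT
    rcases eq_or_ne c 0 with rfl | hc
    · simpa using hzero
    intro x hx y hy hd
    have habs : (0:ℝ) < |c| := abs_pos.2 hc
    choose z hz hyz using hy
    choose a ha haz using hz
    have hyb : ∀ n, |y n| ≤ |c| • |T (a n)| := by
      intro n
      refine le_trans (hyz n) ?_
      have : z n = c • T (a n) := by rw [← haz n]; simp
      rw [this, abs_smul_real]
    set w : ℕ → F := fun n => |c|⁻¹ • y n with hw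
    have hw_abs : ∀ n, |w n| = |c|⁻¹ • |y n| := by
      intro n
      rw [hw]
      simp only
      rw [abs_smul_real, abs_of_pos (inv_pos.2 habs)]
    have hw_solid : ∀ n, w n ∈ SolidHull (T '' Set.Icc 0 x) := by
      intro n
      refine ⟨T (a n), ⟨a n, Set.mem_Icc.2 (ha n), rfl⟩, ?_⟩
      rw [hw_abs n]
      have := smul_mono_real (inv_nonneg.2 habs.le) (hyb n)
      rwa [inv_smul_smul₀ habs.ne'] at this
    have hw_disj : DisjSeq w := by
      intro m n hmn
      rw [hw_abs m, hw_abs n, ← smul_inf_real (inv_pos.2 habs), hd m n hmn, smul_zero]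
    have hw_tend := hT x hx w hw_solid hw_disj
    have hyw : ∀ n, ‖y n‖ = |c| * ‖w n‖ := by
      intro n
      have : y n = |c| • w n := by rw [hw]; simp [smul_smul, mul_inv_cancel₀ habs.ne']
      rw [this, norm_smul, Real.norm_eq_abs, abs_abs]
    rw [funext hyw]
    simpa using hw_tend.const_mul |c|
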